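/- Conservation of the Laplace–Runge–Lenz (eccentricity) vector: if r'' = −μ r/‖r‖³, then e(t) = (r'(t) × (r(t) × r'(t)))/μ − r(t)/‖r(t)‖ is constant along the motion. -/

import Mathlib

open scoped RealInnerProductSpace

/-- The cross product in `EuclideanSpace ℝ (Fin 3)`. -/
noncomputable def cross3 (u v : EuclideanSpace ℝ (Fin 3)) : EuclideanSpace ℝ (Fin 3) :=
  (WithLp.equiv 2 (Fin 3 → ℝ)).symm
    ![u 1 * v 2 - u 2 * v 1, u 2 * v 0 - u 0 * v 2, u 0 * v 1 - u 1 * v 0]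

lemma cross3_self (u : EuclideanSpace ℝ (Fin 3)) : cross3 u u = 0 := by
  ext i; fin_cases i <;> simp [cross3] <;> ring

lemma cross3_zero_right (u : EuclideanSpace ℝ (Fin 3)) : cross3 u 0 = 0 := by
  ext i; fin_cases i <;> simp [cross3]

lemma cross3_smul_right (c : ℝ) (u v : EuclideanSpace ℝ (Fin 3)) :
    cross3 u (c • v) = c • cross3 u v := by
  ext i; fin_cases i <;> simp [cross3] <;> ring

lemma cross3_smul_left (c : ℝ) (u v : EuclideanSpace ℝ (Fin 3)) :
    cross3 (c • u) v = c • cross3 u v := by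
  ext i; fin_cases i <;> simp [cross3] <;> ring

lemma cross3_triple (u v : EuclideanSpace ℝ (Fin 3)) :
    cross3 u (cross3 u v) = ⟪u, v⟫ • u - ⟪u, u⟫ • v := by
  ext i; fin_cases i <;>
    simp [cross3, PiLp.inner_apply, Fin.sum_univ_three, EuclideanSpace.real_norm_sq_eq] <;> ring

lemma hasDerivAt_euc_iff {f : ℝ → EuclideanSpace ℝ (Fin 3)} {f' : EuclideanSpace ℝ (Fin 3)}
    {t : ℝ} :
    HasDerivAt f f' t ↔ ∀ i, HasDerivAt (fun s => f s i) (f' i) t := by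
  constructor
  · intro h i
    exact ((EuclideanSpace.proj (𝕜 := ℝ) i).hasFDerivAt.comp_hasDerivAt t h)
  · intro h
    have h2 : HasDerivAt (fun s => (fun i => f s i : Fin 3 → ℝ)) (fun i => f' i) t :=
      hasDerivAt_pi.mpr h
    exact ((PiLp.continuousLinearEquiv 2 ℝ (fun _ : Fin 3 => ℝ)).symm :
      (Fin 3 → ℝ) →L[ℝ] EuclideanSpace ℝ (Fin 3)).hasFDerivAt.comp_hasDerivAt t h2

lemma hasDerivAt_cross {u v : ℝ → EuclideanSpace ℝ (Fin 3)}
    {u' v' : EuclideanSpace ℝ (Fin 3)} {t : ℝ}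
    (hu : HasDerivAt u u' t) (hv : HasDerivAt v v' t) :
    HasDerivAt (fun s => cross3 (u s) (v s)) (cross3 u' (v t) + cross3 (u t) v') t := by
  rw [hasDerivAt_euc_iff] at hu hv ⊢
  intro i
  fin_cases i <;>
  · simp only [cross3, WithLp.equiv_symm_apply, PiLp.toLp_apply, PiLp.add_apply, Matrix.cons_val_zero,
      Matrix.cons_val_one, Matrix.head_cons, Matrix.cons_val_two, Matrix.tail_cons]
    first
    | exact (((hu 1).mul (hv 2)).sub ((hu 2).mul (hv 1))).congr_deriv (by simp; ring)
    | exact (((hu 2).mul (hv 0)).sub ((hu 0).mul (hv 2))).congr_deriv (by simp; ring)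
    | exact (((hu 0).mul (hv 1)).sub ((hu 1).mul (hv 0))).congr_deriv (by simp; ring)

theorem kepler_LRL_conservation (μ : ℝ) (hμ : 0 < μ)
    (r : ℝ → EuclideanSpace ℝ (Fin 3))
    (hr : Differentiable ℝ r) (hr' : Differentiable ℝ (deriv r))
    (hne : ∀ t, r t ≠ 0)
    (heom : ∀ t, deriv (deriv r) t = -(μ / ‖r t‖ ^ 3) • r t) :
    ∀ t₁ t₂ : ℝ,
      μ⁻¹ • cross3 (deriv r t₁) (cross3 (r t₁) (deriv r t₁)) - ‖r t₁‖⁻¹ • r t₁ =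
      μ⁻¹ • cross3 (deriv r t₂) (cross3 (r t₂) (deriv r t₂)) - ‖r t₂‖⁻¹ • r t₂ := by
  set e : ℝ → EuclideanSpace ℝ (Fin 3) := fun s =>
    μ⁻¹ • cross3 (deriv r s) (cross3 (r s) (deriv r s)) - ‖r s‖⁻¹ • r s with he_def
  have key : ∀ t, HasDerivAt e 0 t := by
    intro t
    set u := r t
    set v := deriv r t with hv_def
    set n := ‖r t‖ with hn_def
    have hn0 : n ≠ 0 := norm_ne_zero_iff.mpr (hne t)
    set p : ℝ := ⟪u, v⟫ with hp_def
    have hrd : HasDerivAt r v t := (hr t).hasDerivAt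
    have hvd : HasDerivAt (deriv r) (-(μ / n ^ 3) • u) t := by
      have := (hr' t).hasDerivAt
      rwa [heom t] at this
    -- derivative of the angular momentum L s = cross3 (r s) (deriv r s) is 0
    have hL : HasDerivAt (fun s => cross3 (r s) (deriv r s)) 0 t := by
      have h := hasDerivAt_cross hrd hvd
      have : cross3 v (deriv r t) + cross3 (r t) (-(μ / n ^ 3) • u) = 0 := by
        rw [← hv_def, cross3_self, cross3_smul_right, cross3_self, smul_zero, add_zero]
      rwa [this] at h
    -- derivative of outer cross product
    have houter : HasDerivAt (fun s => cross3 (deriv r s) (cross3 (r s) (deriv r s)))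
        (cross3 (-(μ / n ^ 3) • u) (cross3 u v)) t := by
      have h := hasDerivAt_cross hvd hL
      rwa [cross3_zero_right, add_zero] at h
    -- derivative of s ↦ ‖r s‖
    have hq : HasDerivAt (fun s => ⟪r s, r s⟫) (⟪u, v⟫ + ⟪v, u⟫) t := hrd.inner ℝ hrd
    have hqt : ⟪u, u⟫ = n ^ 2 := real_inner_self_eq_norm_sq u
    have hqne : ⟪u, u⟫ ≠ 0 := by rw [hqt]; positivity
    have hn' : HasDerivAt (fun s => ‖r s‖) (p / n) t := by
      have h := (Real.hasDerivAt_sqrt hqne).comp t hq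
      have h2 : HasDerivAt (fun s => Real.sqrt ⟪r s, r s⟫)
          (1 / (2 * Real.sqrt ⟪u, u⟫) * (⟪u, v⟫ + ⟪v, u⟫)) t := h
      have heq : (fun s => Real.sqrt ⟪r s, r s⟫) = fun s => ‖r s‖ := by
        funext s
        rw [real_inner_self_eq_norm_sq, Real.sqrt_sq (norm_nonneg _)]
      rw [heq] at h2
      convert h2 using 1
      have hvu : ⟪v, u⟫ = p := by rw [hp_def]; exact real_inner_comm u v
      rw [hvu, ← hp_def, hqt, Real.sqrt_sq (norm_nonneg _), ← hn_def]
      field_simp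
      ring
    have hninv : HasDerivAt (fun s => ‖r s‖⁻¹) (-(p / n) / n ^ 2) t := hn'.inv hn0
    have hg : HasDerivAt (fun s => ‖r s‖⁻¹ • r s)
        (n⁻¹ • v + (-(p / n) / n ^ 2) • u) t := hninv.smul hrd
    have he : HasDerivAt e
        (μ⁻¹ • cross3 (-(μ / n ^ 3) • u) (cross3 u v)
          - (n⁻¹ • v + (-(p / n) / n ^ 2) • u)) t :=
      (houter.const_smul μ⁻¹).sub hg
    have hzero : μ⁻¹ • cross3 (-(μ / n ^ 3) • u) (cross3 u v)
        - (n⁻¹ • v + (-(p / n) / n ^ 2) • u) = 0 := by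
      rw [cross3_smul_left, cross3_triple, ← hp_def, hqt]
      have hμ0 : μ ≠ 0 := ne_of_gt hμ
      match_scalars <;> field_simp <;> ring
    rw [hzero] at he
    exact he
  intro t₁ t₂
  have hdiff : Differentiable ℝ e := fun t => (key t).differentiableAt
  have hderiv : ∀ t, deriv e t = 0 := fun t => (key t).deriv
  exact is_const_of_deriv_eq_zero hdiff hderiv t₁ t₂
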